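/- Let A_1, ..., A_n be events in a probability space, let G be a negative dependency graph for these events, and suppose x_1, ..., x_n ∈ [0,1) satisfy P(A_i) ≤ x_i · ∏_{j ∈ J_i} (1 - x_j) for every i ∈ [n]. Then for every proper subset S of [n] with P(∩_{j∈S} A_j^c) > 0 and every i ∉ S, one has P(A_i | ∩_{j∈S} A_j^c) ≤ x_i. -/
import Mathlib

open MeasureTheory Finset

/-- The key claim in the proof of the Lovász Local Lemma: under the hypotheses of the
lemma, for every proper subset `S` of `[n]` with `P(⋂_{j ∈ S} (A j)ᶜ) > 0` and every
`i ∉ S`, one has `P(A i | ⋂_{j ∈ S} (A j)ᶜ) ≤ x i`. -/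
theorem lovasz_local_lemma_claim {Ω : Type*} [MeasurableSpace Ω] (μ : Measure Ω)
    [IsProbabilityMeasure μ] {n : ℕ} (A : Fin n → Set Ω)
    (hA : ∀ i, MeasurableSet (A i))
    (G : SimpleGraph (Fin n)) [DecidableRel G.Adj]
    (hndg : ∀ (i : Fin n) (S : Finset (Fin n)), i ∉ S → (∀ j ∈ S, ¬ G.Adj i j) →
      0 < μ (⋂ j ∈ S, (A j)ᶜ) →
      (μ (A i ∩ ⋂ j ∈ S, (A j)ᶜ)).toReal / (μ (⋂ j ∈ S, (A j)ᶜ)).toReal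
        ≤ (μ (A i)).toReal)
    (x : Fin n → ℝ) (hx : ∀ i, x i ∈ Set.Ico (0 : ℝ) 1)
    (hP : ∀ i, (μ (A i)).toReal ≤ x i * ∏ j ∈ G.neighborFinset i, (1 - x j)) :
    ∀ S : Finset (Fin n), S ≠ Finset.univ → 0 < μ (⋂ j ∈ S, (A j)ᶜ) →
      ∀ i ∉ S,
        (μ (A i ∩ ⋂ j ∈ S, (A j)ᶜ)).toReal / (μ (⋂ j ∈ S, (A j)ᶜ)).toReal ≤ x i := by
  -- notation
  have hBmeas : ∀ T : Finset (Fin n), MeasurableSet (⋂ j ∈ T, (A j)ᶜ) := fun T =>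
    MeasurableSet.biInter T.countable_toSet (fun j _ => (hA j).compl)
  have hmono : ∀ T U : Finset (Fin n), T ⊆ U →
      (⋂ j ∈ U, (A j)ᶜ : Set Ω) ⊆ ⋂ j ∈ T, (A j)ᶜ := by
    intro T U hTU ω hω
    simp only [Set.mem_iInter] at *
    exact fun j hj => hω j (hTU hj)
  intro S
  induction S using Finset.strongInduction with
  | _ S IH =>
  intro hSuniv hSpos i hiS
  have hxI := hx i
  have hSposR : 0 < (μ (⋂ j ∈ S, (A j)ᶜ)).toReal :=
    ENNReal.toReal_pos hSpos.ne' (measure_ne_top μ _)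
  -- the claim at proper subsets, multiplied out
  have claim : ∀ T : Finset (Fin n), T ⊂ S → ∀ k ∉ T,
      (μ (A k ∩ ⋂ j ∈ T, (A j)ᶜ)).toReal ≤ x k * (μ (⋂ j ∈ T, (A j)ᶜ)).toReal := by
    intro T hTS k hkT
    have hTpos : 0 < μ (⋂ j ∈ T, (A j)ᶜ) :=
      lt_of_lt_of_le hSpos (measure_mono (hmono T S hTS.subset))
    have hTposR : 0 < (μ (⋂ j ∈ T, (A j)ᶜ)).toReal :=
      ENNReal.toReal_pos hTpos.ne' (measure_ne_top μ _)
    have hTuniv : T ≠ Finset.univ := by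
      rintro rfl; exact hkT (Finset.mem_univ k)
    have := IH T hTS hTuniv hTpos k hkT
    exact (div_le_iff₀ hTposR).mp this
  -- key product lower bound
  have key : ∀ (m : ℕ) (T : Finset (Fin n)), T ⊆ S → (S \ T).card = m →
      (∏ j ∈ S \ T, (1 - x j)) * (μ (⋂ j ∈ T, (A j)ᶜ)).toReal
        ≤ (μ (⋂ j ∈ S, (A j)ᶜ)).toReal := by
    intro m
    induction m with
    | zero =>
      intro T hTS hcard
      have : S \ T = ∅ := Finset.card_eq_zero.mp hcard
      have hTS' : T = S := Finset.Subset.antisymm hTS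
        (fun a ha => by
          by_contra hna
          exact absurd (Finset.mem_sdiff.mpr ⟨ha, hna⟩) (by simp [this]))
      subst hTS'
      simp [this]
    | succ m ih =>
      intro T hTS hcard
      have hne : (S \ T).Nonempty := Finset.card_pos.mp (by omega)
      obtain ⟨k, hk⟩ := hne
      have hkS : k ∈ S := (Finset.mem_sdiff.mp hk).1
      have hkT : k ∉ T := (Finset.mem_sdiff.mp hk).2
      set T' := insert k T with hT'
      have hT'S : T' ⊆ S := Finset.insert_subset hkS hTS
      have hsd : S \ T' = (S \ T).erase k := by
        ext a
        simp only [Finset.mem_sdiff, Finset.mem_erase, Finset.mem_insert, hT']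
        tauto
      have hcard' : (S \ T').card = m := by
        rw [hsd, Finset.card_erase_of_mem hk]; omega
      have ihT' := ih T' hT'S hcard'
      -- μ(∩T') = μ(∩T) - μ(A k ∩ ∩T)
      have hsplit : μ ((⋂ j ∈ T, (A j)ᶜ) ∩ A k) + μ ((⋂ j ∈ T, (A j)ᶜ) \ A k)
          = μ (⋂ j ∈ T, (A j)ᶜ) := measure_inter_add_diff _ (hA k)
      have hint : (⋂ j ∈ T', (A j)ᶜ : Set Ω) = (⋂ j ∈ T, (A j)ᶜ) \ A k := by
        rw [hT']
        simp only [Finset.set_biInter_insert]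
        rw [Set.inter_comm, Set.diff_eq]
      have hTsub : T ⊂ S := Finset.ssubset_iff_of_subset hTS |>.mpr ⟨k, hkS, hkT⟩
      have hcl := claim T hTsub k hkT
      have heq : (μ (⋂ j ∈ T', (A j)ᶜ)).toReal
          = (μ (⋂ j ∈ T, (A j)ᶜ)).toReal - (μ (A k ∩ ⋂ j ∈ T, (A j)ᶜ)).toReal := by
        rw [hint, Set.inter_comm (A k)]
        have := congrArg ENNReal.toReal hsplit
        rw [ENNReal.toReal_add (measure_ne_top μ _) (measure_ne_top μ _)] at this
        linarith
      have hTle : (1 - x k) * (μ (⋂ j ∈ T, (A j)ᶜ)).toReal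
          ≤ (μ (⋂ j ∈ T', (A j)ᶜ)).toReal := by
        rw [heq]; nlinarith [ENNReal.toReal_nonneg (a := μ (⋂ j ∈ T, (A j)ᶜ))]
      have hprodeq : (∏ j ∈ S \ T, (1 - x j))
          = (1 - x k) * ∏ j ∈ S \ T', (1 - x j) := by
        rw [hsd]; exact (Finset.mul_prod_erase _ _ hk).symm
      have hprodnn : 0 ≤ ∏ j ∈ S \ T', (1 - x j) :=
        Finset.prod_nonneg fun j _ => by linarith [(hx j).2]
      calc (∏ j ∈ S \ T, (1 - x j)) * (μ (⋂ j ∈ T, (A j)ᶜ)).toReal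
          = (∏ j ∈ S \ T', (1 - x j)) * ((1 - x k) * (μ (⋂ j ∈ T, (A j)ᶜ)).toReal) := by
            rw [hprodeq]; ring
        _ ≤ (∏ j ∈ S \ T', (1 - x j)) * (μ (⋂ j ∈ T', (A j)ᶜ)).toReal :=
            mul_le_mul_of_nonneg_left hTle hprodnn
        _ ≤ _ := ihT'
  -- split S into neighbors and non-neighbors of i
  set S₁ := S.filter (G.Adj i) with hS₁
  set S₂ := S \ S₁ with hS₂
  have hS₂sub : S₂ ⊆ S := Finset.sdiff_subset
  have hiS₂ : i ∉ S₂ := fun h => hiS (hS₂sub h)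
  have hS₂nadj : ∀ j ∈ S₂, ¬ G.Adj i j := by
    intro j hj
    have := Finset.mem_sdiff.mp hj
    intro hadj
    exact this.2 (Finset.mem_filter.mpr ⟨this.1, hadj⟩)
  have hS₂pos : 0 < μ (⋂ j ∈ S₂, (A j)ᶜ) :=
    lt_of_lt_of_le hSpos (measure_mono (hmono S₂ S hS₂sub))
  have hS₂posR : 0 < (μ (⋂ j ∈ S₂, (A j)ᶜ)).toReal :=
    ENNReal.toReal_pos hS₂pos.ne' (measure_ne_top μ _)
  have hnum0 : (μ (A i ∩ ⋂ j ∈ S₂, (A j)ᶜ)).toReal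
      ≤ (μ (A i)).toReal * (μ (⋂ j ∈ S₂, (A j)ᶜ)).toReal :=
    (div_le_iff₀ hS₂posR).mp (hndg i S₂ hiS₂ hS₂nadj hS₂pos)
  have hnum1 : (μ (A i ∩ ⋂ j ∈ S, (A j)ᶜ)).toReal
      ≤ (μ (A i ∩ ⋂ j ∈ S₂, (A j)ᶜ)).toReal := by
    apply ENNReal.toReal_mono (measure_ne_top μ _)
    exact measure_mono (Set.inter_subset_inter_right _ (hmono S₂ S hS₂sub))
  -- product over neighbors vs over S₁
  have hS₁nbr : S₁ ⊆ G.neighborFinset i := by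
    intro j hj
    rw [SimpleGraph.mem_neighborFinset]
    exact (Finset.mem_filter.mp hj).2
  have hprodle : (∏ j ∈ G.neighborFinset i, (1 - x j)) ≤ ∏ j ∈ S₁, (1 - x j) := by
    have hsplit := Finset.prod_sdiff hS₁nbr (f := fun j => 1 - x j)
    have h1 : (∏ j ∈ G.neighborFinset i \ S₁, (1 - x j)) ≤ 1 :=
      Finset.prod_le_one (fun j _ => by linarith [(hx j).2]) (fun j _ => by linarith [(hx j).1])
    have h0 : 0 ≤ ∏ j ∈ S₁, (1 - x j) :=
      Finset.prod_nonneg fun j _ => by linarith [(hx j).2]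
    nlinarith
  have hS₁pos : 0 < ∏ j ∈ S₁, (1 - x j) :=
    Finset.prod_pos fun j _ => by linarith [(hx j).2]
  have hSdiff : S \ S₂ = S₁ := by
    rw [hS₂, sdiff_sdiff_right_self]
    exact inf_eq_right.mpr (Finset.filter_subset _ _)
  have hden : (∏ j ∈ S₁, (1 - x j)) * (μ (⋂ j ∈ S₂, (A j)ᶜ)).toReal
      ≤ (μ (⋂ j ∈ S, (A j)ᶜ)).toReal := by
    have := key (S \ S₂).card S₂ hS₂sub rfl
    rwa [hSdiff] at this
  -- conclude
  rw [div_le_iff₀ hSposR]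
  calc (μ (A i ∩ ⋂ j ∈ S, (A j)ᶜ)).toReal
      ≤ (μ (A i)).toReal * (μ (⋂ j ∈ S₂, (A j)ᶜ)).toReal := hnum1.trans hnum0
    _ ≤ (x i * ∏ j ∈ S₁, (1 - x j)) * (μ (⋂ j ∈ S₂, (A j)ᶜ)).toReal := by
        apply mul_le_mul_of_nonneg_right _ hS₂posR.le
        calc (μ (A i)).toReal ≤ x i * ∏ j ∈ G.neighborFinset i, (1 - x j) := hP i
          _ ≤ x i * ∏ j ∈ S₁, (1 - x j) := mul_le_mul_of_nonneg_left hprodle hxI.1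
    _ = x i * ((∏ j ∈ S₁, (1 - x j)) * (μ (⋂ j ∈ S₂, (A j)ᶜ)).toReal) := by ring
    _ ≤ x i * (μ (⋂ j ∈ S, (A j)ᶜ)).toReal := mul_le_mul_of_nonneg_left hden hxI.1
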